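/- Let D = ℕ ∪ {∞} with the natural order. Define the widening a ▽ b = a if a = b and a ▽ b = ∞ otherwise, and the narrowing (for b ≤ a) a △ b = b if a = ∞ and a △ b = a otherwise. Let ⊟ be the combined operator (a ⊟ b = a △ b if b ≤ a, else a ▽ b). Consider the monotone system x₁ = x₂, x₂ = x₃ + 1, x₃ = x₁ (where ∞ + 1 = ∞). Then round-robin iteration with ⊟ in the order x₁, x₂, x₃ starting from the all-zero assignment does not terminate: for every n ≥ 1, after n full rounds the assignment differs from the assignment after round n+1. -/
import Mathlib


open Classical

/-- Widening on ℕ∞: a ▽ b = a if a = b, ∞ otherwise. -/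
noncomputable def w3 (a b : ℕ∞) : ℕ∞ := if a = b then a else ⊤
/-- Narrowing on ℕ∞ (for b ≤ a): a △ b = b if a = ∞, a otherwise. -/
noncomputable def n3 (a b : ℕ∞) : ℕ∞ := if a = ⊤ then b else a
/-- Combined operator. -/
noncomputable def box3 (a b : ℕ∞) : ℕ∞ := if b ≤ a then n3 a b else w3 a b

/-- One full round of round-robin iteration on the system
x₁ = x₂, x₂ = x₃ + 1, x₃ = x₁, updating in order x₁, x₂, x₃. -/
noncomputable def round3 (p : ℕ∞ × ℕ∞ × ℕ∞) : ℕ∞ × ℕ∞ × ℕ∞ :=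
  let a := box3 p.1 p.2.1
  let b := box3 p.2.1 (p.2.2 + 1)
  let c := box3 p.2.2 a
  (a, b, c)

lemma round_top (k : ℕ) : round3 (⊤, (k:ℕ∞), ⊤) = ((k:ℕ∞), ⊤, (k:ℕ∞)) := by
  have h1 : box3 ⊤ (k:ℕ∞) = (k:ℕ∞) := by simp [box3, n3]
  have h2 : box3 (k:ℕ∞) (⊤:ℕ∞) = ⊤ := by
    simp [box3, n3, w3, (WithTop.coe_ne_top : (k:ℕ∞) ≠ ⊤)]
  simp [round3, top_add, h1, h2]

lemma round_mid (k : ℕ) : round3 ((k:ℕ∞), ⊤, (k:ℕ∞)) = (⊤, ((k:ℕ∞)+1), ⊤) := by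
  have h1 : box3 (k:ℕ∞) ⊤ = ⊤ := by
    simp [box3, n3, w3, (WithTop.coe_ne_top : (k:ℕ∞) ≠ ⊤)]
  have h2 : box3 ⊤ ((k:ℕ∞) + 1) = (k:ℕ∞) + 1 := by simp [box3, n3]
  simp [round3, h1, h2]

lemma iter_even : ∀ k : ℕ, round3^[2*k+2] ((0:ℕ∞), (0:ℕ∞), (0:ℕ∞)) = (⊤, ((k:ℕ∞)+1), ⊤) := by
  intro k
  induction k with
  | zero =>
    have h1 : round3 ((0:ℕ∞), (0:ℕ∞), (0:ℕ∞)) = (0, ⊤, 0) := by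
      have hw : w3 (0:ℕ∞) 1 = ⊤ := by rw [w3, if_neg (by norm_num)]
      simp [round3, box3, n3, hw]
    have h2 : round3 ((0:ℕ∞), ⊤, (0:ℕ∞)) = (⊤, (1:ℕ∞), ⊤) := by
      have := round_mid 0
      simpa using this
    show round3^[2] ((0:ℕ∞), (0:ℕ∞), (0:ℕ∞)) = _
    simp only [Function.iterate_succ_apply, Function.iterate_zero_apply]
    rw [h1, h2]; norm_num
  | succ n ih =>
    have : 2*(n+1)+2 = (2*n+2) + 1 + 1 := by ring
    rw [this, Function.iterate_succ_apply', Function.iterate_succ_apply', ih]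
    have hm : round3 (⊤, ((n:ℕ∞)+1), ⊤) = (((n:ℕ∞)+1), ⊤, ((n:ℕ∞)+1)) := by
      have := round_top (n+1); push_cast at this ⊢; exact this
    rw [hm]
    have := round_mid (n+1); push_cast at this ⊢; rw [this]

lemma iter_odd : ∀ k : ℕ, round3^[2*k+3] ((0:ℕ∞), (0:ℕ∞), (0:ℕ∞)) = (((k:ℕ∞)+1), ⊤, ((k:ℕ∞)+1)) := by
  intro k
  have : 2*k+3 = (2*k+2) + 1 := by ring
  rw [this, Function.iterate_succ_apply', iter_even]
  have := round_top (k+1); push_cast at this ⊢; exact this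

theorem stmt3 : ∀ n : ℕ, 1 ≤ n →
    round3^[n] ((0 : ℕ∞), (0 : ℕ∞), (0 : ℕ∞)) ≠
    round3^[n+1] ((0 : ℕ∞), (0 : ℕ∞), (0 : ℕ∞)) := by
  intro n hn
  have hne : ∀ k : ℕ, ((k:ℕ∞)+1) ≠ ⊤ := by
    intro k h
    exact (WithTop.coe_ne_top : ((k+1:ℕ):ℕ∞) ≠ ⊤) (by push_cast; exact h)
  match n, hn with
  | 1, _ =>
    have h1 : round3^[1] ((0:ℕ∞), (0:ℕ∞), (0:ℕ∞)) = (0, ⊤, 0) := by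
      have hw : w3 (0:ℕ∞) 1 = ⊤ := by rw [w3, if_neg (by norm_num)]
      simp [round3, box3, n3, hw]
    have h2 := iter_even 0
    rw [h1]; norm_num at h2 ⊢; rw [h2]
    intro h
    exact (by simp : (0:ℕ∞) ≠ ⊤) (congrArg Prod.fst h)
  | (m+2), _ =>
    rcases Nat.even_or_odd m with ⟨k, hk⟩ | ⟨k, hk⟩
    · -- m = 2k, n = 2k+2
      have e1 : m + 2 = 2*k+2 := by omega
      have e2 : m + 2 + 1 = 2*k+3 := by omega
      rw [e2, e1, iter_even, iter_odd]
      intro h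
      exact (hne k).symm (congrArg Prod.fst h)
    · -- m = 2k+1, n = 2k+3
      have e1 : m + 2 = 2*k+3 := by omega
      have e2 : m + 2 + 1 = 2*(k+1)+2 := by omega
      rw [e2, e1, iter_odd, iter_even]
      intro h
      exact (hne k) (congrArg Prod.fst h)
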